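/- Let A be a group, let F be a finite subgroup of Aut(A), and let 𝓗 be a collection of infinite subgroups of A such that: (i) f(H) ∈ 𝓗 for every f ∈ F and H ∈ 𝓗; (ii) 𝓗 is an almost malnormal collection, i.e. for all H, K ∈ 𝓗 and a ∈ A, if H ∩ aKa⁻¹ is infinite then H = K and a ∈ H; (iii) the F-action on 𝓗 is free, i.e. if f(H) = H for some H ∈ 𝓗 then f = id. Then for every H ∈ 𝓗, identifying A with its image in the semidirect product A⋊F, the commensurator of H in A⋊F equals H: Comm_{A⋊F}(H) = H. -/

import Mathlib

open Subgroup Pointwise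

private lemma infinite_inf_of_relindex_ne_zero {G : Type*} [Group G] {Q P : Subgroup G}
    (h : Q.relIndex P ≠ 0) (hP : (P : Set G).Infinite) :
    ((Q ⊓ P : Subgroup G) : Set G).Infinite := by
  have hPinf : Infinite P := hP.to_subtype
  have hcard : Nat.card (Q.subgroupOf P) * (Q.subgroupOf P).index = Nat.card P :=
    Subgroup.card_mul_index _
  have hPcard : Nat.card P = 0 := Nat.card_eq_zero_of_infinite
  have hidx : (Q.subgroupOf P).index ≠ 0 := h
  have hzero : Nat.card (Q.subgroupOf P) = 0 := by
    rcases Nat.mul_eq_zero.mp (hcard.trans hPcard) with h1 | h2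
    · exact h1
    · exact absurd h2 hidx
  have hinf : Infinite (Q.subgroupOf P) := by
    rcases Nat.card_eq_zero.mp hzero with he | hi
    · exact absurd (he.false ⟨1, (Q.subgroupOf P).one_mem⟩) (fun h => h)
    · exact hi
  rw [← Set.infinite_coe_iff]
  exact Infinite.of_injective
    (fun x : Q.subgroupOf P => (⟨(x.1 : G), x.2, x.1.2⟩ : ((Q ⊓ P : Subgroup G) : Set G)))
    (by intro x y hxy
        simp only [Subtype.mk.injEq] at hxy
        exact Subtype.ext (Subtype.ext (by simpa using congrArg (fun z : ((Q ⊓ P : Subgroup G) : Set G) => (z : G)) hxy)))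

theorem stmt16 {A : Type*} [Group A]
    (F : Subgroup (MulAut A)) (hFfin : (F : Set (MulAut A)).Finite)
    (𝓗 : Set (Subgroup A))
    (hInf : ∀ H ∈ 𝓗, ((H : Set A)).Infinite)
    (hInv : ∀ f ∈ F, ∀ H ∈ 𝓗, Subgroup.map (MulEquiv.toMonoidHom f) H ∈ 𝓗)
    (hMal : ∀ H ∈ 𝓗, ∀ K ∈ 𝓗, ∀ a : A,
      ((H ⊓ Subgroup.map (MulAut.conj a).toMonoidHom K : Subgroup A) : Set A).Infinite →
        H = K ∧ a ∈ H)
    (hFree : ∀ f ∈ F, ∀ H ∈ 𝓗, Subgroup.map (MulEquiv.toMonoidHom f) H = H → f = 1) :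
    ∀ H ∈ 𝓗,
      Commensurable.commensurator
          (Subgroup.map (SemidirectProduct.inl : A →* A ⋊[F.subtype] F) H)
        = Subgroup.map (SemidirectProduct.inl : A →* A ⋊[F.subtype] F) H := by
  intro H hH
  set ι : A →* A ⋊[F.subtype] F := SemidirectProduct.inl with hι
  set P : Subgroup (A ⋊[F.subtype] F) := Subgroup.map ι H with hP
  -- conjugation computation
  have key : ∀ g : A ⋊[F.subtype] F,
      ConjAct.toConjAct g • P =
        Subgroup.map ι
          (Subgroup.map (MulAut.conj g.left).toMonoidHom
            (Subgroup.map (MulEquiv.toMonoidHom (g.right : MulAut A)) H)) := by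
    intro g
    ext x
    rw [Subgroup.mem_smul_pointwise_iff_exists]
    constructor
    · rintro ⟨p, hp, hpx⟩
      rcases hp with ⟨h, hh, rfl⟩
      refine ⟨g.left * (g.right : MulAut A) h * g.left⁻¹, ⟨_, ⟨h, hh, rfl⟩, rfl⟩, ?_⟩
      rw [← hpx]
      rw [ConjAct.smul_def, ConjAct.ofConjAct_toConjAct]
      ext
      · simp [hι, SemidirectProduct.mul_left, SemidirectProduct.inv_left,
          SemidirectProduct.inv_right, SemidirectProduct.left_inl, SemidirectProduct.right_inl,
          map_one, map_mul, map_inv, mul_assoc]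
      · simp [hι, SemidirectProduct.mul_right, SemidirectProduct.inv_right,
          SemidirectProduct.right_inl]
    · rintro ⟨y, ⟨z, ⟨h, hh, rfl⟩, rfl⟩, rfl⟩
      refine ⟨ι h, ⟨h, hh, rfl⟩, ?_⟩
      rw [ConjAct.smul_def, ConjAct.ofConjAct_toConjAct]
      ext
      · simp [hι, SemidirectProduct.mul_left, SemidirectProduct.inv_left,
          SemidirectProduct.inv_right, SemidirectProduct.left_inl, SemidirectProduct.right_inl,
          map_one, map_mul, map_inv, mul_assoc]
      · simp [hι, SemidirectProduct.mul_right, SemidirectProduct.inv_right,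
          SemidirectProduct.right_inl]
  apply le_antisymm
  · intro g hg
    rw [Commensurable.commensurator_mem_iff] at hg
    have h1 : (ConjAct.toConjAct g • P).relIndex P ≠ 0 := hg.1
    have hPinf : (P : Set (A ⋊[F.subtype] F)).Infinite := by
      have := hInf H hH
      have : ((ι '' (H : Set A))).Infinite :=
        (hInf H hH).image (Set.injOn_of_injective SemidirectProduct.inl_injective)
      simpa [hP, Subgroup.coe_map] using this
    have hinter := infinite_inf_of_relindex_ne_zero h1 hPinf
    set K : Subgroup A := Subgroup.map (MulEquiv.toMonoidHom (g.right : MulAut A)) H with hK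
    have hKmem : K ∈ 𝓗 := hInv _ (g.right).2 H hH
    rw [key g, hP, ← Subgroup.map_inf _ _ ι SemidirectProduct.inl_injective] at hinter
    have hinterA :
        ((Subgroup.map (MulAut.conj g.left).toMonoidHom K ⊓ H : Subgroup A) : Set A).Infinite := by
      rw [Subgroup.coe_map] at hinter
      exact Set.Infinite.of_image _ hinter
    rw [inf_comm] at hinterA
    obtain ⟨hHK, haH⟩ := hMal H hH K hKmem g.left hinterA
    have hfone : (g.right : MulAut A) = 1 := hFree _ (g.right).2 H hH hHK.symm
    have hgr : g.right = 1 := Subtype.ext hfone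
    have hgeq : g = ι g.left := by
      ext
      · rfl
      · rw [hgr]; rfl
    rw [hgeq]
    exact ⟨g.left, haH, rfl⟩
  · intro g hg
    rw [Commensurable.commensurator_mem_iff]
    have : ConjAct.toConjAct g • P = P := by
      ext x
      rw [Subgroup.mem_pointwise_smul_iff_inv_smul_mem, ← ConjAct.toConjAct_inv,
        ConjAct.smul_def, ConjAct.ofConjAct_toConjAct, inv_inv]
      constructor
      · intro h
        have := P.mul_mem (P.mul_mem hg h) (P.inv_mem hg)
        simpa [mul_assoc] using this
      · intro h
        exact P.mul_mem (P.mul_mem (P.inv_mem hg) h) hg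
    rw [this]
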